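/- For every n ≥ 4 there exist n closed line segments in ℝ³, not all contained in a single plane, whose set of transversals has exactly n − 1 connected components: there are transversals T₁, …, T_{n−1} pairwise in distinct connected components of transversals, and every transversal lies in the same connected component as some T_j. -/

import Mathlib

open Set

noncomputable section

/-- The line in ℝ³ through `a` with direction `v`. -/
def lineThrough (a v : ℝ × ℝ × ℝ) : Set (ℝ × ℝ × ℝ) :=
  {p | ∃ r : ℝ, p = a + r • v}

/-- `L` is a line in ℝ³. -/
def IsLine (L : Set (ℝ × ℝ × ℝ)) : Prop :=
  ∃ a v : ℝ × ℝ × ℝ, v ≠ 0 ∧ L = lineThrough a v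

/-- `L` is a transversal to the family of sets `s`: it is a line meeting every `s i`. -/
def IsTransversal {n : ℕ} (s : Fin n → Set (ℝ × ℝ × ℝ)) (L : Set (ℝ × ℝ × ℝ)) : Prop :=
  IsLine L ∧ ∀ i, (L ∩ s i).Nonempty

/-- Two transversals `L₀`, `L₁` to the family `s` lie in the same connected component of
transversals: one can be moved continuously to the other while remaining a transversal. -/
def SameComp {n : ℕ} (s : Fin n → Set (ℝ × ℝ × ℝ)) (L₀ L₁ : Set (ℝ × ℝ × ℝ)) : Prop :=
  ∃ a v : ℝ → ℝ × ℝ × ℝ,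
    ContinuousOn a (Icc 0 1) ∧ ContinuousOn v (Icc 0 1) ∧
    (∀ t ∈ Icc (0:ℝ) 1, v t ≠ 0) ∧
    (∀ t ∈ Icc (0:ℝ) 1, ∀ i, (lineThrough (a t) (v t) ∩ s i).Nonempty) ∧
    lineThrough (a 0) (v 0) = L₀ ∧ lineThrough (a 1) (v 1) = L₁

/-- `H` is a plane (two-dimensional affine subspace) in ℝ³. -/
def IsPlane (H : Set (ℝ × ℝ × ℝ)) : Prop :=
  ∃ a u w : ℝ × ℝ × ℝ, LinearIndependent ℝ ![u, w] ∧
    H = {p | ∃ r s : ℝ, p = a + r • u + s • w}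

open Real



/-- point on unit circle at angle θ, at height 0 -/
def cpt (θ : ℝ) : ℝ × ℝ × ℝ := (Real.cos θ, Real.sin θ, 0)
/-- direction of A-ruling line -/
def dA (θ : ℝ) : ℝ × ℝ × ℝ := (-Real.sin θ, Real.cos θ, 1)
/-- direction of B-ruling line -/
def dB (φ : ℝ) : ℝ × ℝ × ℝ := (-Real.sin φ, Real.cos φ, -1)

lemma cos_lt_one' {x : ℝ} (h0 : 0 < x) (h2 : x < 2*π) : Real.cos x < 1 := by
  rcases le_total x π with h | h
  · have := Real.cos_lt_cos_of_nonneg_of_le_pi (le_refl 0) h h0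
    simpa using this
  · have hx : Real.cos x = Real.cos (2*π - x) := by
      rw [Real.cos_two_pi_sub]
    rw [hx]
    have := Real.cos_lt_cos_of_nonneg_of_le_pi (le_refl 0) (by linarith) (by linarith : (0:ℝ) < 2*π - x)
    simpa using this

lemma exists_rep (u : ℝ) : ∃ l : ℤ, |u - 2*π*l| ≤ π := by
  refine ⟨round (u / (2*π)), ?_⟩
  have h2π : (0:ℝ) < 2*π := by positivity
  have := abs_sub_round (u / (2*π))
  have heq : u - 2*π*(round (u / (2*π))) = (u / (2*π) - round (u / (2*π))) * (2*π) := by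
    field_simp
  rw [heq, abs_mul, abs_of_pos h2π]
  nlinarith [this]

lemma cos_shift (u : ℝ) (l : ℤ) : Real.cos (u - 2*π*l) = Real.cos u := by
  have := Real.cos_add_int_mul_two_pi (u - 2*π*l) l
  rw [show u - 2*π*l + l*(2*π) = u by ring] at this
  exact this.symm

/-- K0: if cos u ≥ cos b then u is within b of a multiple of 2π. -/
lemma K0 {b u : ℝ} (hb0 : 0 < b) (hbπ : b ≤ π) (h : Real.cos b ≤ Real.cos u) :
    ∃ l : ℤ, |u - 2*π*l| ≤ b := by
  obtain ⟨l, hl⟩ := exists_rep u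
  refine ⟨l, ?_⟩
  by_contra hc
  push_neg at hc
  have h1 : Real.cos |u - 2*π*l| < Real.cos b :=
    Real.cos_lt_cos_of_nonneg_of_le_pi (le_of_lt hb0) hl hc
  rw [Real.cos_abs, cos_shift] at h1
  linarith

/-- K0d: if cos u ≤ cos b (b ≤ π) then u is at distance ≥ b from every multiple of 2π. -/
lemma K0d {b u : ℝ} (hb0 : 0 ≤ b) (hbπ : b ≤ π) (h : Real.cos u ≤ Real.cos b) (hlt : Real.cos b < 1) :
    ∀ l : ℤ, b ≤ |u - 2*π*l| := by
  intro l
  by_contra hc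
  push_neg at hc
  have h1 : Real.cos b < Real.cos |u - 2*π*l| :=
    Real.cos_lt_cos_of_nonneg_of_le_pi (abs_nonneg _) hbπ hc
  rw [Real.cos_abs, cos_shift] at h1
  linarith

/-- K0c: if u is at distance ≥ b (b ≤ π) from every multiple of 2π, then cos u ≤ cos b. -/
lemma K0c {b u : ℝ} (hb0 : 0 ≤ b) (hbπ : b ≤ π) (h : ∀ l : ℤ, b ≤ |u - 2*π*l|) :
    Real.cos u ≤ Real.cos b := by
  obtain ⟨l, hl⟩ := exists_rep u
  calc Real.cos u = Real.cos (u - 2*π*l) := (cos_shift u l).symm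
    _ = Real.cos |u - 2*π*l| := (Real.cos_abs _).symm
    _ ≤ Real.cos b := Real.cos_le_cos_of_nonneg_of_le_pi hb0 hl (h l)

/-- every unit vector has an angle -/
lemma exists_angle {x y : ℝ} (h : x^2 + y^2 = 1) : ∃ θ : ℝ, Real.cos θ = x ∧ Real.sin θ = y := by
  have hx1 : -1 ≤ x := by nlinarith
  have hx2 : x ≤ 1 := by nlinarith
  have hs : Real.sin (Real.arccos x) = Real.sqrt (1 - x^2) := Real.sin_arccos x
  have hy2 : Real.sqrt (1 - x^2) = |y| := by
    rw [show 1 - x^2 = y^2 by linarith, Real.sqrt_sq_eq_abs]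
  rcases le_total 0 y with hy | hy
  · exact ⟨Real.arccos x, Real.cos_arccos hx1 hx2, by rw [hs, hy2, abs_of_nonneg hy]⟩
  · refine ⟨-Real.arccos x, by rw [Real.cos_neg]; exact Real.cos_arccos hx1 hx2, ?_⟩
    rw [Real.sin_neg, hs, hy2, abs_of_nonpos hy]; ring








lemma mem_lineThrough {a v p : ℝ × ℝ × ℝ} : p ∈ lineThrough a v ↔ ∃ r : ℝ, p = a + r • v :=
  Iff.rfl

lemma seg_eq {P d : ℝ × ℝ × ℝ} {N : ℝ} (hN : 0 < N) :
    segment ℝ (P - N • d) (P + N • d) = {p | ∃ s : ℝ, |s| ≤ N ∧ p = P + s • d} := by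
  have hN' : N ≠ 0 := ne_of_gt hN
  rw [segment_eq_image' ℝ _ _]
  ext p
  constructor
  · rintro ⟨t, ht, rfl⟩
    refine ⟨(2*t - 1)*N, ?_, ?_⟩
    · rw [abs_le]
      constructor <;> nlinarith [ht.1, ht.2]
    · have : P + N • d - (P - N • d) = (2*N) • d := by module
      rw [this]
      match_scalars <;> ring
  · rintro ⟨s, hs, rfl⟩
    rw [abs_le] at hs
    have hd1 : -(1:ℝ) ≤ s/N := by
      rw [neg_le, ← neg_div]
      exact div_le_one_of_le₀ (by linarith) (le_of_lt hN)
    have hd2 : s/N ≤ 1 := div_le_one_of_le₀ hs.2 (le_of_lt hN)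
    refine ⟨(s/N + 1)/2, ⟨by linarith, by linarith⟩, ?_⟩
    have hc : ((s/N+1)/2) * (2*N) = s + N := by
      field_simp
    have h2 : P + N • d - (P - N • d) = (2*N) • d := by module
    rw [h2]
    show P - N • d + ((s/N+1)/2) • (2*N) • d = P + s • d
    rw [smul_smul, hc]
    module

lemma lineThrough_eq_of {c d a v : ℝ × ℝ × ℝ} {k t₀ : ℝ} (hk : k ≠ 0)
    (hv : v = k • d) (ha : a = c + t₀ • d) : lineThrough a v = lineThrough c d := by
  ext p
  constructor
  · rintro ⟨r, rfl⟩
    exact ⟨t₀ + r*k, by rw [hv, ha]; module⟩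
  · rintro ⟨r, rfl⟩
    exact ⟨(r - t₀)/k, by rw [hv, ha]; match_scalars <;> field_simp <;> ring⟩

def Qf (p : ℝ × ℝ × ℝ) : ℝ := p.1^2 + p.2.1^2 - p.2.2^2 - 1

lemma dB_on_quadric (φ s : ℝ) : Qf (cpt φ + s • dB φ) = 0 := by
  simp only [Qf, cpt, dB, Prod.fst_add, Prod.snd_add, Prod.smul_fst, Prod.smul_snd,
    smul_eq_mul]
  nlinarith [Real.sin_sq_add_cos_sq φ]

lemma Blines_disjoint {φ φ' s s' : ℝ}
    (h : cpt φ + s • dB φ = cpt φ' + s' • dB φ') :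
    Real.cos φ = Real.cos φ' ∧ Real.sin φ = Real.sin φ' := by
  have h1 := congrArg Prod.fst h
  have h2 := congrArg (fun p => p.2.1) h
  have h3 := congrArg (fun p => p.2.2) h
  simp only [cpt, dB, Prod.fst_add, Prod.snd_add, Prod.smul_fst, Prod.smul_snd,
    smul_eq_mul] at h1 h2 h3
  have hss : s = s' := by linarith
  subst hss
  constructor <;> nlinarith [sq_nonneg s, sq_nonneg (Real.cos φ - Real.cos φ'),
    sq_nonneg (Real.sin φ - Real.sin φ')]

lemma dichotomy {x y u t : ℝ} (hx : x^2 + y^2 = 1) (hw : u^2 + t^2 = 1)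
    (ho : x*u + y*t = 0) : (u = -y ∧ t = x) ∨ (u = y ∧ t = -x) := by
  set d := x*t - y*u with hd
  have hd2 : d^2 = 1 := by linear_combination (u^2+t^2) * hx + hw - (x*u+y*t) * ho
  have hu : u = -y*d := by linear_combination x * ho - u * hx
  have ht : t = x*d := by linear_combination y * ho - t * hx
  have hfac : (d - 1)*(d + 1) = 0 := by linear_combination hd2
  rcases mul_eq_zero.1 hfac with h | h
  · have hd1 : d = 1 := by linarith
    rw [hd1] at hu ht
    left; constructor <;> linarith
  · have hd1 : d = -1 := by linarith
    rw [hd1] at hu ht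
    right; constructor <;> linarith

lemma quad_zero {A B C r₀ r₁ r₂ : ℝ} (h01 : r₀ ≠ r₁) (h02 : r₀ ≠ r₂) (h12 : r₁ ≠ r₂)
    (e0 : A*r₀^2 + B*r₀ + C = 0) (e1 : A*r₁^2 + B*r₁ + C = 0) (e2 : A*r₂^2 + B*r₂ + C = 0) :
    A = 0 ∧ B = 0 ∧ C = 0 := by
  have k01 : A*(r₀ + r₁) + B = 0 := by
    have h : (r₀ - r₁) * (A*(r₀ + r₁) + B) = 0 := by linear_combination e0 - e1
    rcases mul_eq_zero.1 h with h | h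
    · exact absurd (by linarith : r₀ = r₁) h01
    · exact h
  have k12 : A*(r₁ + r₂) + B = 0 := by
    have h : (r₁ - r₂) * (A*(r₁ + r₂) + B) = 0 := by linear_combination e1 - e2
    rcases mul_eq_zero.1 h with h | h
    · exact absurd (by linarith : r₁ = r₂) h12
    · exact h
  have hA : A = 0 := by
    have h : A * (r₀ - r₂) = 0 := by linear_combination k01 - k12
    rcases mul_eq_zero.1 h with h | h
    · exact h
    · exact absurd (by linarith : r₀ = r₂) h02
  refine ⟨hA, ?_, ?_⟩
  · rw [hA] at k01; linarith
  · rw [hA] at e0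
    have hB : B = 0 := by rw [hA] at k01; linarith
    rw [hB] at e0; linarith


def bet (m : ℕ) : ℝ := π / m
def gam (m : ℕ) : ℝ := Real.cos (bet m / 2)
def rad (m : ℕ) : ℝ := Real.sqrt ((1 + gam m) / (1 - gam m))

lemma bet_pos {m : ℕ} (hm : 3 ≤ m) : 0 < bet m := by
  have : (0:ℝ) < m := by
    have : (3:ℝ) ≤ m := by exact_mod_cast hm
    linarith
  exact div_pos Real.pi_pos this

lemma bet_le {m : ℕ} (hm : 3 ≤ m) : bet m ≤ π / 3 := by
  have h3 : (3:ℝ) ≤ m := by exact_mod_cast hm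
  apply div_le_div_of_nonneg_left (le_of_lt Real.pi_pos) (by norm_num) h3

lemma pi_eq_mul_bet {m : ℕ} (hm : 3 ≤ m) : (m:ℝ) * bet m = π := by
  have h3 : (3:ℝ) ≤ m := by exact_mod_cast hm
  have : (m:ℝ) ≠ 0 := by linarith
  rw [bet]; field_simp

lemma gam_pos {m : ℕ} (hm : 3 ≤ m) : 0 < gam m := by
  apply Real.cos_pos_of_mem_Ioo
  have h1 := bet_pos hm
  have h2 := bet_le hm
  have h3 := Real.pi_pos
  constructor
  · linarith
  · linarith

lemma gam_lt_one {m : ℕ} (hm : 3 ≤ m) : gam m < 1 := by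
  apply cos_lt_one' (by linarith [bet_pos hm])
  have := bet_le hm; have := Real.pi_pos
  linarith

lemma rad_sq {m : ℕ} (hm : 3 ≤ m) : (rad m)^2 = (1 + gam m) / (1 - gam m) := by
  apply Real.sq_sqrt
  have h1 := gam_pos hm; have h2 := gam_lt_one hm
  apply div_nonneg <;> linarith

lemma rad_pos {m : ℕ} (hm : 3 ≤ m) : 0 < rad m := by
  apply Real.sqrt_pos.2
  have h1 := gam_pos hm; have h2 := gam_lt_one hm
  apply div_pos <;> linarith


/-- The key intersection criterion: the ruling line `L(θ)` meets the segment on `M(φ)`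
of radius `rad m` iff `cos (θ - φ) ≥ -(gam m)`. -/
lemma meet_iff {m : ℕ} (hm : 3 ≤ m) (θ φ : ℝ) :
    (lineThrough (cpt θ) (dA θ) ∩
      segment ℝ (cpt φ - rad m • dB φ) (cpt φ + rad m • dB φ)).Nonempty
    ↔ -(gam m) ≤ Real.cos (θ - φ) := by
  have hγ0 := gam_pos hm
  have hγ1 := gam_lt_one hm
  have hN0 := rad_pos hm
  have hN2 := rad_sq hm
  have hNγ : (rad m)^2 * (1 - gam m) = 1 + gam m := by
    rw [hN2]
    exact div_mul_cancel₀ _ (by linarith)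
  have pyθ := Real.sin_sq_add_cos_sq θ
  have pyφ := Real.sin_sq_add_cos_sq φ
  rw [seg_eq hN0, Real.cos_sub]
  set C := Real.cos θ * Real.cos φ + Real.sin θ * Real.sin φ with hC
  constructor
  · rintro ⟨p, ⟨r, rfl⟩, s, hs, heq⟩
    have h1 := congrArg Prod.fst heq
    have h2 := congrArg (fun p : ℝ × ℝ × ℝ => p.2.1) heq
    have h3 := congrArg (fun p : ℝ × ℝ × ℝ => p.2.2) heq
    simp only [cpt, dA, dB, Prod.fst_add, Prod.snd_add, Prod.smul_fst, Prod.smul_snd,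
      smul_eq_mul] at h1 h2 h3
    have hr : r = -s := by linarith
    subst hr
    have E1 : s*(Real.sin θ + Real.sin φ) = Real.cos φ - Real.cos θ := by linarith
    have E2 : s*(Real.cos θ + Real.cos φ) = Real.sin θ - Real.sin φ := by linarith
    have key : s^2*(2 + 2*C) = 2 - 2*C := by
      linear_combination (s*(Real.sin θ + Real.sin φ) + (Real.cos φ - Real.cos θ)) * E1
        + (s*(Real.cos θ + Real.cos φ) + (Real.sin θ - Real.sin φ)) * E2
        + (1 - s^2) * pyθ + (1 - s^2) * pyφ
    have hCn : -1 ≤ C := by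
      have := Real.neg_one_le_cos (θ - φ)
      rw [Real.cos_sub] at this
      exact this
    rcases eq_or_lt_of_le hCn with hCe | hClt
    · exfalso
      have : s^2 * (2 + 2*C) = 0 := by rw [← hCe]; ring
      rw [this] at key
      rw [← hCe] at key
      linarith
    · have hs2 : s^2 ≤ (rad m)^2 := by
        have := abs_le.1 hs
        nlinarith
      nlinarith [key, hs2, hNγ, mul_pos (by linarith : (0:ℝ) < 1 + C) (by linarith : (0:ℝ) < 1 - gam m)]
  · intro h
    have hpos : 0 < 1 + C := by linarith
    set S := (Real.sin θ * Real.cos φ - Real.cos θ * Real.sin φ) / (1 + C) with hS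
    have hSkey : S * (1 + C) = Real.sin θ * Real.cos φ - Real.cos θ * Real.sin φ := by
      rw [hS]; exact div_mul_cancel₀ _ (ne_of_gt hpos)
    refine ⟨cpt φ + S • dB φ, ⟨-S, ?_⟩, S, ?_, rfl⟩
    · have hx : Real.cos φ + S*(-Real.sin φ) = Real.cos θ + (-S)*(-Real.sin θ) := by
        have : S * (Real.sin θ + Real.sin φ) = Real.cos φ - Real.cos θ := by
          have expand : (Real.sin θ * Real.cos φ - Real.cos θ * Real.sin φ) * (Real.sin θ + Real.sin φ)
              = (Real.cos φ - Real.cos θ) * (1 + C) := by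
            linear_combination (Real.cos φ) * pyθ - (Real.cos θ) * pyφ
          rw [hS, div_mul_eq_mul_div, div_eq_iff (ne_of_gt hpos)]
          linear_combination expand
        linarith [this]
      have hy : Real.sin φ + S*(Real.cos φ) = Real.sin θ + (-S)*(Real.cos θ) := by
        have : S * (Real.cos θ + Real.cos φ) = Real.sin θ - Real.sin φ := by
          have expand : (Real.sin θ * Real.cos φ - Real.cos θ * Real.sin φ) * (Real.cos θ + Real.cos φ)
              = (Real.sin θ - Real.sin φ) * (1 + C) := by
            linear_combination (Real.sin θ) * pyφ - (Real.sin φ) * pyθ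
          rw [hS, div_mul_eq_mul_div, div_eq_iff (ne_of_gt hpos)]
          linear_combination expand
        linarith [this]
      apply Prod.ext
      · simpa [cpt, dA, dB] using hx
      · apply Prod.ext
        · simpa [cpt, dA, dB] using hy
        · simp [cpt, dA, dB]
    · -- |S| ≤ rad m
      have hsin2 : (Real.sin θ * Real.cos φ - Real.cos θ * Real.sin φ)^2 = 1 - C^2 := by
        have := Real.sin_sq_add_cos_sq (θ - φ)
        rw [Real.sin_sub, Real.cos_sub] at this
        linear_combination this
      have hS2 : S^2 * (1 + C) = 1 - C := by
        have h1 : S^2 * (1 + C)^2 = 1 - C^2 := by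
          rw [← hsin2]
          rw [← mul_pow, hSkey]
        have h2 : (S^2 * (1 + C) - (1 - C)) * (1 + C) = 0 := by
          linear_combination h1
        rcases mul_eq_zero.1 h2 with h | h
        · linarith
        · linarith
      have hS2N : S^2 ≤ (rad m)^2 := by
        nlinarith [hNγ, mul_pos hpos (by linarith : (0:ℝ) < 1 - gam m)]
      calc |S| = Real.sqrt (S^2) := (Real.sqrt_sq_eq_abs S).symm
        _ ≤ Real.sqrt ((rad m)^2) := Real.sqrt_le_sqrt hS2N
        _ = rad m := Real.sqrt_sq (le_of_lt hN0)


/-- angle of the `k`-th segment line -/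
def phiI (m k : ℕ) : ℝ := (2*k+1) * bet m + π
/-- endpoints of the `k`-th segment -/
def xE (m k : ℕ) : ℝ × ℝ × ℝ := cpt (phiI m k) - rad m • dB (phiI m k)
def yE (m k : ℕ) : ℝ × ℝ × ℝ := cpt (phiI m k) + rad m • dB (phiI m k)

lemma angle_ne {m k k' : ℕ} (hm : 3 ≤ m) (hk : k < m) (hk' : k' < m) (hne : k ≠ k')
    (h1 : Real.cos (phiI m k) = Real.cos (phiI m k'))
    (h2 : Real.sin (phiI m k) = Real.sin (phiI m k')) : False := by
  have hβ := bet_pos hm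
  have hπ := pi_eq_mul_bet hm
  have hcos1 : Real.cos (phiI m k - phiI m k') = 1 := by
    rw [Real.cos_sub, h1, h2]
    nlinarith [Real.sin_sq_add_cos_sq (phiI m k')]
  have hdiff : phiI m k - phiI m k' = (2*(k:ℝ) - 2*(k':ℝ)) * bet m := by
    simp only [phiI]; ring
  rw [hdiff] at hcos1
  rw [← Real.cos_abs] at hcos1
  have habs : |(2*(k:ℝ) - 2*(k':ℝ)) * bet m| = |2*(k:ℝ) - 2*(k':ℝ)| * bet m := by
    rw [abs_mul, abs_of_pos hβ]
  rw [habs] at hcos1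
  have hge : (2:ℝ) ≤ |2*(k:ℝ) - 2*(k':ℝ)| := by
    have : (1:ℝ) ≤ |(k:ℝ) - (k':ℝ)| := by
      have h1 : ((k:ℤ) - k') ≠ 0 := by
        intro h; apply hne; omega
      have h2 : (1:ℤ) ≤ |(k:ℤ) - k'| := Int.one_le_abs h1
      have h3 : (1:ℝ) ≤ |((k:ℤ) - k' : ℤ)| := by exact_mod_cast h2
      rwa [Int.cast_abs, Int.cast_sub, Int.cast_natCast, Int.cast_natCast] at h3
    rw [show (2:ℝ)*(k:ℝ) - 2*(k':ℝ) = 2*((k:ℝ) - k') by ring, abs_mul, abs_of_pos (by norm_num : (0:ℝ) < 2)]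
    linarith
  have hle : |2*(k:ℝ) - 2*(k':ℝ)| ≤ 2*(m:ℝ) - 2 := by
    have hk1 : (k:ℝ) ≤ (m:ℝ) - 1 := by
      have : (k:ℝ) + 1 ≤ m := by exact_mod_cast hk
      linarith
    have hk2 : (k':ℝ) ≤ (m:ℝ) - 1 := by
      have : (k':ℝ) + 1 ≤ m := by exact_mod_cast hk'
      linarith
    rw [abs_le]
    constructor <;> nlinarith [Nat.cast_nonneg (α := ℝ) k, Nat.cast_nonneg (α := ℝ) k']
  have hup : |2*(k:ℝ) - 2*(k':ℝ)| * bet m < 2*π := by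
    calc |2*(k:ℝ) - 2*(k':ℝ)| * bet m ≤ (2*(m:ℝ) - 2) * bet m := by
          apply mul_le_mul_of_nonneg_right hle (le_of_lt hβ)
      _ < 2*((m:ℝ) * bet m) := by nlinarith
      _ = 2*π := by rw [hπ]
  have hlo : 0 < |2*(k:ℝ) - 2*(k':ℝ)| * bet m := by nlinarith
  exact absurd hcos1 (ne_of_lt (cos_lt_one' hlo hup))

set_option maxHeartbeats 2000000 in
/-- Classification of transversals: any line meeting the three segments 0,1,2 is a ruling
line `L(θ)`. -/
lemma classify {m : ℕ} (hm : 3 ≤ m) {a v : ℝ × ℝ × ℝ} (hv : v ≠ 0)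
    (h0 : (lineThrough a v ∩ segment ℝ (xE m 0) (yE m 0)).Nonempty)
    (h1 : (lineThrough a v ∩ segment ℝ (xE m 1) (yE m 1)).Nonempty)
    (h2 : (lineThrough a v ∩ segment ℝ (xE m 2) (yE m 2)).Nonempty) :
    ∃ θ : ℝ, v = v.2.2 • dA θ ∧ v.2.2 ≠ 0 ∧
      lineThrough a v = lineThrough (cpt θ) (dA θ) := by
  have hN0 := rad_pos hm
  simp only [xE, yE, seg_eq hN0] at h0 h1 h2
  obtain ⟨p0, ⟨r0, hp0⟩, s0, hs0, hq0⟩ := h0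
  obtain ⟨p1, ⟨r1, hp1⟩, s1, hs1, hq1⟩ := h1
  obtain ⟨p2, ⟨r2, hp2⟩, s2, hs2, hq2⟩ := h2
  rw [hp0] at hq0; rw [hp1] at hq1; rw [hp2] at hq2
  -- distinctness of parameters
  have hd01 : r0 ≠ r1 := by
    intro he
    rw [he] at hq0
    obtain ⟨hc, hs⟩ := Blines_disjoint (hq0.symm.trans hq1)
    exact angle_ne hm (by omega) (by omega) (by omega) hc hs
  have hd02 : r0 ≠ r2 := by
    intro he
    rw [he] at hq0
    obtain ⟨hc, hs⟩ := Blines_disjoint (hq0.symm.trans hq2)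
    exact angle_ne hm (by omega) (by omega) (by omega) hc hs
  have hd12 : r1 ≠ r2 := by
    intro he
    rw [he] at hq1
    obtain ⟨hc, hs⟩ := Blines_disjoint (hq1.symm.trans hq2)
    exact angle_ne hm (by omega) (by omega) (by omega) hc hs
  -- quadratic coefficients
  have expand : ∀ r : ℝ, Qf (a + r • v) =
      (v.1^2 + v.2.1^2 - v.2.2^2)*r^2 + (2*(a.1*v.1 + a.2.1*v.2.1 - a.2.2*v.2.2))*r
        + (a.1^2 + a.2.1^2 - a.2.2^2 - 1) := by
    intro r
    simp only [Qf, Prod.fst_add, Prod.snd_add, Prod.smul_fst, Prod.smul_snd, smul_eq_mul]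
    ring
  have q0 : Qf (a + r0 • v) = 0 := by rw [hq0]; exact dB_on_quadric _ _
  have q1 : Qf (a + r1 • v) = 0 := by rw [hq1]; exact dB_on_quadric _ _
  have q2 : Qf (a + r2 • v) = 0 := by rw [hq2]; exact dB_on_quadric _ _
  have e0 := (expand r0).symm.trans q0
  have e1 := (expand r1).symm.trans q1
  have e2 := (expand r2).symm.trans q2
  obtain ⟨hA, hB, hC⟩ := quad_zero hd01 hd02 hd12 e0 e1 e2
  have hv3 : v.2.2 ≠ 0 := by
    intro h3
    apply hv
    rw [h3] at hA
    have hv1 : v.1 = 0 := by nlinarith [sq_nonneg v.1, sq_nonneg v.2.1]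
    have hv2 : v.2.1 = 0 := by nlinarith [sq_nonneg v.1, sq_nonneg v.2.1]
    have : v = (v.1, v.2.1, v.2.2) := rfl
    rw [this, hv1, hv2, h3]
    rfl
  set w1 := v.1 / v.2.2 with hw1
  set w2 := v.2.1 / v.2.2 with hw2
  set x0 := a.1 - a.2.2 * w1 with hx0
  set y0 := a.2.1 - a.2.2 * w2 with hy0
  have hw : w1^2 + w2^2 = 1 := by
    rw [hw1, hw2]
    field_simp
    linear_combination hA
  have ho : a.1*w1 + a.2.1*w2 = a.2.2 := by
    rw [hw1, hw2]
    field_simp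
    linear_combination hB / 2
  have hxy : x0^2 + y0^2 = 1 := by
    rw [hx0, hy0]
    linear_combination hC + (a.2.2^2) * hw - 2*a.2.2 * ho
  have horth : x0*w1 + y0*w2 = 0 := by
    rw [hx0, hy0]
    linear_combination ho - a.2.2 * hw
  obtain ⟨θ, hcθ, hsθ⟩ := exists_angle hxy
  have hv1 : v.2.2 * w1 = v.1 := by rw [hw1, mul_comm, div_mul_cancel₀ _ hv3]
  have hv2 : v.2.2 * w2 = v.2.1 := by rw [hw2, mul_comm, div_mul_cancel₀ _ hv3]
  have hvv : v = (v.1, v.2.1, v.2.2) := rfl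
  have haa : a = (a.1, a.2.1, a.2.2) := rfl
  rcases dichotomy hxy hw horth with ⟨hw1e, hw2e⟩ | ⟨hw1e, hw2e⟩
  · -- A-ruling case
    have hW1 : w1 = -Real.sin θ := by rw [hw1e, hsθ]
    have hW2 : w2 = Real.cos θ := by rw [hw2e, hcθ]
    have hvW : v = v.2.2 • dA θ := by
      rw [hvv]
      apply Prod.ext
      · show v.1 = (v.2.2 • dA θ).1
        simp only [dA, Prod.smul_fst, smul_eq_mul]
        rw [← hW1, hv1]
      · apply Prod.ext
        · show v.2.1 = (v.2.2 • dA θ).2.1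
          simp only [dA, Prod.smul_snd, Prod.smul_fst, smul_eq_mul]
          rw [← hW2, hv2]
        · show v.2.2 = (v.2.2 • dA θ).2.2
          simp only [dA, Prod.smul_snd, smul_eq_mul, mul_one]
    have haW : a = cpt θ + a.2.2 • dA θ := by
      rw [haa]
      apply Prod.ext
      · show a.1 = (cpt θ + a.2.2 • dA θ).1
        simp only [cpt, dA, Prod.fst_add, Prod.smul_fst, smul_eq_mul]
        rw [hcθ, ← hW1, hx0]; ring
      · apply Prod.ext
        · show a.2.1 = (cpt θ + a.2.2 • dA θ).2.1
          simp only [cpt, dA, Prod.snd_add, Prod.smul_snd, Prod.fst_add, Prod.smul_fst, smul_eq_mul]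
          rw [hsθ, ← hW2, hy0]; ring
        · show a.2.2 = (cpt θ + a.2.2 • dA θ).2.2
          simp only [cpt, dA, Prod.snd_add, Prod.smul_snd, smul_eq_mul, mul_one]
          ring
    exact ⟨θ, hvW, hv3, lineThrough_eq_of hv3 hvW haW⟩
  · -- B-ruling case: impossible
    exfalso
    have hW1 : w1 = Real.sin θ := by rw [hw1e]; exact hsθ.symm
    have hW2 : w2 = -Real.cos θ := by rw [hw2e, hcθ]
    have hvW : v = (-v.2.2) • dB θ := by
      rw [hvv]
      apply Prod.ext
      · show v.1 = ((-v.2.2) • dB θ).1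
        simp only [dB, Prod.smul_fst, smul_eq_mul]
        rw [← hv1, hW1]; ring
      · apply Prod.ext
        · show v.2.1 = ((-v.2.2) • dB θ).2.1
          simp only [dB, Prod.smul_snd, Prod.smul_fst, smul_eq_mul]
          rw [← hv2, hW2]; ring
        · show v.2.2 = ((-v.2.2) • dB θ).2.2
          simp only [dB, Prod.smul_snd, smul_eq_mul]
          ring
    have haW : a = cpt θ + (-a.2.2) • dB θ := by
      rw [haa]
      apply Prod.ext
      · show a.1 = (cpt θ + (-a.2.2) • dB θ).1
        simp only [cpt, dB, Prod.fst_add, Prod.smul_fst, smul_eq_mul]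
        rw [hcθ, hx0, hW1]; ring
      · apply Prod.ext
        · show a.2.1 = (cpt θ + (-a.2.2) • dB θ).2.1
          simp only [cpt, dB, Prod.snd_add, Prod.smul_snd, Prod.fst_add, Prod.smul_fst, smul_eq_mul]
          rw [hsθ, hy0, hW2]; ring
        · show a.2.2 = (cpt θ + (-a.2.2) • dB θ).2.2
          simp only [cpt, dB, Prod.snd_add, Prod.smul_snd, smul_eq_mul]
          ring
    have hne3 : (-v.2.2) ≠ 0 := by simpa using hv3
    have hline : lineThrough a v = lineThrough (cpt θ) (dB θ) :=
      lineThrough_eq_of hne3 hvW haW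
    have hm0 : a + r0 • v ∈ lineThrough (cpt θ) (dB θ) := by
      rw [← hline]; exact ⟨r0, rfl⟩
    have hm1 : a + r1 • v ∈ lineThrough (cpt θ) (dB θ) := by
      rw [← hline]; exact ⟨r1, rfl⟩
    obtain ⟨t0, ht0⟩ := hm0
    obtain ⟨t1, ht1⟩ := hm1
    have k0 := Blines_disjoint ((ht0.symm.trans hq0))
    have k1 := Blines_disjoint ((ht1.symm.trans hq1))
    exact angle_ne hm (by omega) (by omega) (by omega)
      (k0.1.symm.trans k1.1) (k0.2.symm.trans k1.2)


lemma line_eq_angle {θ θ' : ℝ}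
    (h : lineThrough (cpt θ) (dA θ) = lineThrough (cpt θ') (dA θ')) :
    Real.cos θ = Real.cos θ' ∧ Real.sin θ = Real.sin θ' := by
  have hmem : cpt θ ∈ lineThrough (cpt θ') (dA θ') := by
    rw [← h]; exact ⟨0, by simp⟩
  obtain ⟨r, hr⟩ := hmem
  have h3 := congrArg (fun p : ℝ × ℝ × ℝ => p.2.2) hr
  simp only [cpt, dA, Prod.snd_add, Prod.smul_snd, smul_eq_mul, mul_one] at h3
  have hr0 : r = 0 := by linarith
  rw [hr0] at hr
  simp only [cpt, dA, zero_smul, add_zero] at hr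
  have h1 := congrArg Prod.fst hr
  have h2 := congrArg (fun p : ℝ × ℝ × ℝ => p.2.1) hr
  simp only [cpt, Prod.ext_iff] at h1 h2
  exact ⟨h1, h2⟩

lemma odd_mul_bet_ge {m : ℕ} (hm : 3 ≤ m) (j k : ℕ) (l : ℤ) :
    bet m ≤ |2*(j:ℝ)*bet m - (2*(k:ℝ)+1)*bet m - 2*π*l| := by
  have hβ := bet_pos hm
  have hπ := pi_eq_mul_bet hm
  have hz : 2*(j:ℝ)*bet m - (2*(k:ℝ)+1)*bet m - 2*π*l
      = ((2*(j:ℤ) - 2*(k:ℤ) - 1 - 2*(m:ℤ)*l : ℤ) : ℝ) * bet m := by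
    rw [← hπ]; push_cast; ring
  rw [hz, abs_mul, abs_of_pos hβ]
  have hz0 : (2*(j:ℤ) - 2*(k:ℤ) - 1 - 2*(m:ℤ)*l) ≠ 0 := by
    intro h
    have h2 : 2 * ((j:ℤ) - (k:ℤ) - (m:ℤ)*l) = 1 := by linarith
    have h3 : (1:ℤ) % 2 = 0 := by rw [← h2]; simp [Int.mul_emod_right]
    norm_num at h3
  have h1 : (1:ℤ) ≤ |2*(j:ℤ) - 2*(k:ℤ) - 1 - 2*(m:ℤ)*l| := Int.one_le_abs hz0
  have h2 : (1:ℝ) ≤ |((2*(j:ℤ) - 2*(k:ℤ) - 1 - 2*(m:ℤ)*l : ℤ) : ℝ)| := by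
    rw [← Int.cast_abs]; exact_mod_cast h1
  nlinarith

lemma K2 {m : ℕ} (hm : 3 ≤ m) (α : ℝ) :
    ∃ j : ℕ, j < m ∧ ∃ l : ℤ, |α - 2*(j:ℝ)*bet m - 2*π*l| ≤ bet m := by
  have hβ := bet_pos hm
  have hπ := pi_eq_mul_bet hm
  have hm0 : (0:ℤ) < (m:ℤ) := by omega
  set j0 : ℤ := round (α / (2*bet m)) with hj0
  have h1 : |α/(2*bet m) - j0| ≤ 1/2 := abs_sub_round _
  have h2 : |α - 2*bet m * j0| ≤ bet m := by
    have heq : α - 2*bet m*j0 = (α/(2*bet m) - j0)*(2*bet m) := by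
      field_simp
    rw [heq, abs_mul, abs_of_pos (by linarith : (0:ℝ) < 2*bet m)]
    nlinarith
  have hmod1 : 0 ≤ j0 % (m:ℤ) := Int.emod_nonneg j0 (by omega)
  have hmod2 : j0 % (m:ℤ) < m := Int.emod_lt_of_pos j0 hm0
  refine ⟨(j0 % (m:ℤ)).toNat, by omega, j0 / (m:ℤ), ?_⟩
  have hcast : (((j0 % (m:ℤ)).toNat : ℕ) : ℝ) = ((j0 % (m:ℤ) : ℤ) : ℝ) := by
    exact_mod_cast congrArg (fun z : ℤ => (z : ℝ)) (Int.toNat_of_nonneg hmod1)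
  have hsplit : ((j0 % (m:ℤ) : ℤ) : ℝ) + (m:ℝ) * ((j0 / (m:ℤ) : ℤ) : ℝ) = (j0 : ℝ) := by
    exact_mod_cast congrArg (fun z : ℤ => (z : ℝ)) (Int.emod_add_mul_ediv j0 (m:ℤ))
  have heq2 : α - 2*(((j0 % (m:ℤ)).toNat : ℕ) : ℝ)*bet m - 2*π*((j0 / (m:ℤ) : ℤ) : ℝ)
      = α - 2*bet m * j0 := by
    rw [hcast, ← hπ]
    linear_combination (-(2*bet m)) * hsplit
  rw [heq2]
  exact h2

lemma K1 {m : ℕ} (hm : 3 ≤ m) (α : ℝ)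
    (hall : ∀ k : ℕ, k < m → Real.cos (α - (2*(k:ℝ)+1)*bet m) ≤ gam m)
    {j j' : ℕ} (hj : j < m) (hj' : j' < m) (hne : j ≠ j')
    (hc : Real.cos (bet m) ≤ Real.cos (α - 2*(j:ℝ)*bet m))
    (hc' : Real.cos (bet m) ≤ Real.cos (α - 2*(j':ℝ)*bet m)) : False := by
  have hβ := bet_pos hm
  have hβ3 := bet_le hm
  have hπ := pi_eq_mul_bet hm
  have hππ := Real.pi_pos
  have hβπ : bet m ≤ π := by linarith
  have hγ1 := gam_lt_one hm
  obtain ⟨l1, hl1⟩ := K0 hβ hβπ hc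
  obtain ⟨l2, hl2⟩ := K0 hβ hβπ hc'
  set e1 := α - 2*(j:ℝ)*bet m - 2*π*l1 with he1
  set e2 := α - 2*(j':ℝ)*bet m - 2*π*l2 with he2
  set D : ℤ := (j':ℤ) - (j:ℤ) + (m:ℤ)*(l2 - l1) with hD
  have hDeq : e1 - e2 = 2*bet m * (D:ℝ) := by
    rw [he1, he2, hD, ← hπ]; push_cast; ring
  have habs1 := abs_le.1 hl1
  have habs2 := abs_le.1 hl2
  have hDle : |(D:ℝ)| ≤ 1 := by
    rw [abs_le]
    constructor <;> nlinarith
  have hDle' : |D| ≤ 1 := by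
    have : ((|D|:ℤ):ℝ) ≤ 1 := by rw [Int.cast_abs]; exact hDle
    exact_mod_cast this
  have hcases : D = -1 ∨ D = 0 ∨ D = 1 := by
    have h := abs_le.1 hDle'
    omega
  have cos1 : ∀ u : ℝ, ∀ li : ℤ, u = 2*π*li → Real.cos u = 1 := by
    intro u li hu
    rw [hu, show 2*π*(li:ℝ) = (li:ℝ)*(2*π) by ring]
    exact Real.cos_int_mul_two_pi li
  rcases hcases with hD1 | hD0 | hD1
  · -- D = -1 : e1 = -bet m, α = (2j-1)β + 2πl1
    have he : e1 = -(bet m) := by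
      rw [hD1] at hDeq
      push_cast at hDeq
      linarith
    have hαe : α = 2*(j:ℝ)*bet m - bet m + 2*π*l1 := by
      rw [he1] at he; linarith
    rcases Nat.eq_zero_or_pos j with hj0 | hj1
    · -- j = 0, use k = m - 1
      have hmc : ((m - 1 : ℕ) : ℝ) = (m:ℝ) - 1 := by
        rw [Nat.cast_sub (by omega)]; norm_num
      have hα : α - (2*((m-1:ℕ):ℝ)+1)*bet m = 2*π*((l1 - 1 : ℤ):ℝ) := by
        rw [hαe, hmc, hj0, ← hπ]
        push_cast
        ring
      have := hall (m-1) (by omega)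
      rw [cos1 _ (l1-1) hα] at this
      linarith
    · -- j ≥ 1, use k = j - 1
      have hjc : ((j - 1 : ℕ) : ℝ) = (j:ℝ) - 1 := by
        rw [Nat.cast_sub (by omega)]; norm_num
      have hα : α - (2*((j-1:ℕ):ℝ)+1)*bet m = 2*π*l1 := by
        rw [hαe, hjc]; ring
      have := hall (j-1) (by omega)
      rw [cos1 _ l1 hα] at this
      linarith
  · -- D = 0 : contradiction with j ≠ j'
    have h0 : (j':ℤ) - (j:ℤ) = (m:ℤ)*(l1 - l2) := by
      have : (j':ℤ) - (j:ℤ) + (m:ℤ)*(l2 - l1) = 0 := hD0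
      linarith [this]
    have hjm : ((j:ℤ)) < (m:ℤ) := by exact_mod_cast hj
    have hjm' : ((j':ℤ)) < (m:ℤ) := by exact_mod_cast hj'
    have hj0' : (0:ℤ) ≤ (j:ℤ) := Int.ofNat_nonneg j
    have hj0'' : (0:ℤ) ≤ (j':ℤ) := Int.ofNat_nonneg j'
    have hm3 : (3:ℤ) ≤ (m:ℤ) := by exact_mod_cast hm
    rcases lt_trichotomy (l1 - l2) 0 with hc0 | hc0 | hc0
    · have hle : l1 - l2 ≤ -1 := by omega
      have : (m:ℤ)*(l1 - l2) ≤ (m:ℤ)*(-1) := by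
        apply mul_le_mul_of_nonneg_left hle (by omega)
      linarith
    · rw [hc0, mul_zero] at h0
      have : j = j' := by omega
      exact hne this
    · have hle : (1:ℤ) ≤ l1 - l2 := by omega
      have : (m:ℤ)*1 ≤ (m:ℤ)*(l1 - l2) := by
        apply mul_le_mul_of_nonneg_left hle (by omega)
      linarith
  · -- D = 1 : e1 = bet m, α = (2j+1)β + 2πl1
    have he : e1 = bet m := by
      rw [hD1] at hDeq
      push_cast at hDeq
      linarith
    have hα : α - (2*(j:ℝ)+1)*bet m = 2*π*l1 := by
      rw [he1] at he; linarith
    have := hall j hj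
    rw [cos1 _ l1 hα] at this
    linarith


lemma interval_dist {β θ θs s' t : ℝ} (hβ : 0 < β) (h1 : β ≤ |θs - s'|) (h2 : β/2 ≤ |θ - s'|)
    (h3 : |θ - θs| ≤ β) (ht0 : 0 ≤ t) (ht1 : t ≤ 1) :
    β/2 ≤ |θ + t*(θs - θ) - s'| := by
  have h3' := abs_le.1 h3
  rcases le_or_gt s' θs with hs | hs
  · have hA : β ≤ θs - s' := by rwa [abs_of_nonneg (by linarith)] at h1
    rcases le_or_gt s' θ with hθ | hθ
    · have hB : β/2 ≤ θ - s' := by rwa [abs_of_nonneg (by linarith)] at h2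
      have key : β/2 ≤ θ + t*(θs - θ) - s' := by
        nlinarith [mul_nonneg ht0 (by linarith : (0:ℝ) ≤ θs - s' - β/2),
          mul_nonneg (by linarith : (0:ℝ) ≤ 1 - t) (by linarith : (0:ℝ) ≤ θ - s' - β/2)]
      exact le_trans key (le_abs_self _)
    · exfalso; linarith
  · have hA : β ≤ s' - θs := by rwa [abs_sub_comm, abs_of_nonneg (by linarith)] at h1
    rcases le_or_gt θ s' with hθ | hθ
    · have hB : β/2 ≤ s' - θ := by rwa [abs_sub_comm, abs_of_nonneg (by linarith)] at h2
      have key : β/2 ≤ s' - (θ + t*(θs - θ)) := by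
        nlinarith [mul_nonneg ht0 (by linarith : (0:ℝ) ≤ s' - θs - β/2),
          mul_nonneg (by linarith : (0:ℝ) ≤ 1 - t) (by linarith : (0:ℝ) ≤ s' - θ - β/2)]
      calc β/2 ≤ s' - (θ + t*(θs - θ)) := key
        _ ≤ |s' - (θ + t*(θs - θ))| := le_abs_self _
        _ = |θ + t*(θs - θ) - s'| := abs_sub_comm _ _
    · exfalso; linarith

lemma no_path {m : ℕ} (hm : 3 ≤ m) (q : ℝ → ℝ × ℝ)
    (hcont : ContinuousOn q (Icc 0 1))
    (hallow : ∀ t ∈ Icc (0:ℝ) 1, ∃ α : ℝ, q t = (Real.cos α, Real.sin α) ∧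
       ∀ k : ℕ, k < m → Real.cos (α - (2*(k:ℝ)+1)*bet m) ≤ gam m)
    {j j' : ℕ} (hj : j < m) (hj' : j' < m) (hne : j ≠ j')
    (h0 : q 0 = (Real.cos (2*(j:ℝ)*bet m), Real.sin (2*(j:ℝ)*bet m)))
    (h1 : q 1 = (Real.cos (2*(j':ℝ)*bet m), Real.sin (2*(j':ℝ)*bet m))) : False := by
  have hβ := bet_pos hm
  have hβ3 := bet_le hm
  have hππ := Real.pi_pos
  have hβπ : bet m ≤ π := by linarith
  haveI : PreconnectedSpace (Icc (0:ℝ) 1) := Subtype.preconnectedSpace isPreconnected_Icc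
  set Q : (Icc (0:ℝ) 1) → ℝ × ℝ := (Icc (0:ℝ) 1).restrict q with hQ
  have hQc : Continuous Q := hcont.restrict
  set F : ℕ → Set (Icc (0:ℝ) 1) := fun r => {x | Real.cos (bet m) ≤
    (Q x).1 * Real.cos (2*(r:ℝ)*bet m) + (Q x).2 * Real.sin (2*(r:ℝ)*bet m)} with hF
  have hFclosed : ∀ r, IsClosed (F r) := by
    intro r
    apply isClosed_le continuous_const
    exact ((hQc.fst).mul continuous_const).add ((hQc.snd).mul continuous_const)
  have hcover : ∀ x : (Icc (0:ℝ) 1), ∃ r : ℕ, r < m ∧ x ∈ F r := by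
    intro x
    obtain ⟨α, hqα, _⟩ := hallow x.1 x.2
    obtain ⟨r, hr, l, hl⟩ := K2 hm α
    refine ⟨r, hr, ?_⟩
    have hcos : Real.cos (bet m) ≤ Real.cos (α - 2*(r:ℝ)*bet m) := by
      calc Real.cos (bet m)
          ≤ Real.cos |α - 2*(r:ℝ)*bet m - 2*π*l| :=
            Real.cos_le_cos_of_nonneg_of_le_pi (abs_nonneg _) hβπ hl
        _ = Real.cos (α - 2*(r:ℝ)*bet m - 2*π*l) := Real.cos_abs _
        _ = Real.cos (α - 2*(r:ℝ)*bet m) := cos_shift _ l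
    show Real.cos (bet m) ≤ _
    rw [hQ]
    show Real.cos (bet m) ≤ (q x.1).1 * _ + (q x.1).2 * _
    rw [hqα]
    rwa [Real.cos_sub] at hcos
  have hdisj : ∀ (x : (Icc (0:ℝ) 1)) (r r' : ℕ), r < m → r' < m → r ≠ r' →
      x ∈ F r → x ∈ F r' → False := by
    intro x r r' hr hr' hrr hxr hxr'
    obtain ⟨α, hqα, hall⟩ := hallow x.1 x.2
    have hc1 : Real.cos (bet m) ≤ Real.cos (α - 2*(r:ℝ)*bet m) := by
      rw [Real.cos_sub]
      have := hxr
      rw [hF] at this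
      simp only [Set.mem_setOf_eq, hQ, Set.restrict_apply, hqα] at this
      change Real.cos (bet m) ≤ (q x.1).1 * _ + (q x.1).2 * _ at this
      rwa [hqα] at this
    have hc2 : Real.cos (bet m) ≤ Real.cos (α - 2*(r':ℝ)*bet m) := by
      rw [Real.cos_sub]
      have := hxr'
      rw [hF] at this
      simp only [Set.mem_setOf_eq, hQ, Set.restrict_apply, hqα] at this
      change Real.cos (bet m) ≤ (q x.1).1 * _ + (q x.1).2 * _ at this
      rwa [hqα] at this
    exact K1 hm α hall hr hr' hrr hc1 hc2
  -- F j is clopen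
  set s : Set ℕ := {r | r < m ∧ r ≠ j} with hs
  have hsfin : s.Finite := (Set.finite_Iio m).subset (fun r hr => hr.1)
  have hcompl : (F j)ᶜ = ⋃ r ∈ s, F r := by
    ext x
    simp only [Set.mem_compl_iff, Set.mem_iUnion, exists_prop]
    constructor
    · intro hx
      obtain ⟨r, hr, hxr⟩ := hcover x
      have hrj : r ≠ j := by
        intro he; rw [he] at hxr; exact hx hxr
      exact ⟨r, ⟨hr, hrj⟩, hxr⟩
    · rintro ⟨r, ⟨hr, hrj⟩, hxr⟩ hxj
      exact hdisj x r j hr hj hrj hxr hxj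
  have hopen : IsOpen (F j) := by
    rw [← isClosed_compl_iff, hcompl]
    exact hsfin.isClosed_biUnion (fun r _ => hFclosed r)
  have hclopen : IsClopen (F j) := ⟨hFclosed j, hopen⟩
  have h0mem : (⟨0, by norm_num⟩ : (Icc (0:ℝ) 1)) ∈ F j := by
    show Real.cos (bet m) ≤ _
    rw [hQ]
    show Real.cos (bet m) ≤ (q 0).1 * _ + (q 0).2 * _
    rw [h0]
    have : Real.cos (2*(j:ℝ)*bet m) * Real.cos (2*(j:ℝ)*bet m)
        + Real.sin (2*(j:ℝ)*bet m) * Real.sin (2*(j:ℝ)*bet m) = 1 := by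
      nlinarith [Real.sin_sq_add_cos_sq (2*(j:ℝ)*bet m)]
    rw [this]
    exact Real.cos_le_one _
  have h1mem : (⟨1, by norm_num⟩ : (Icc (0:ℝ) 1)) ∈ F j' := by
    show Real.cos (bet m) ≤ _
    rw [hQ]
    show Real.cos (bet m) ≤ (q 1).1 * _ + (q 1).2 * _
    rw [h1]
    have : Real.cos (2*(j':ℝ)*bet m) * Real.cos (2*(j':ℝ)*bet m)
        + Real.sin (2*(j':ℝ)*bet m) * Real.sin (2*(j':ℝ)*bet m) = 1 := by
      nlinarith [Real.sin_sq_add_cos_sq (2*(j':ℝ)*bet m)]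
    rw [this]
    exact Real.cos_le_one _
  rcases isClopen_iff.mp hclopen with he | he
  · rw [he] at h0mem; exact h0mem
  · have : (⟨1, by norm_num⟩ : (Icc (0:ℝ) 1)) ∈ F j := by rw [he]; trivial
    exact hdisj _ j j' hj hj' hne this h1mem


def det3 (p q r : ℝ × ℝ × ℝ) : ℝ :=
  p.1*(q.2.1*r.2.2 - q.2.2*r.2.1) - p.2.1*(q.1*r.2.2 - q.2.2*r.1) + p.2.2*(q.1*r.2.1 - q.2.1*r.1)

lemma det3_span {u w : ℝ × ℝ × ℝ} (r0 s0 r1 s1 r2 s2 : ℝ) :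
    det3 (r0•u + s0•w) (r1•u + s1•w) (r2•u + s2•w) = 0 := by
  simp only [det3, Prod.fst_add, Prod.snd_add, Prod.smul_fst, Prod.smul_snd, smul_eq_mul]
  ring

lemma det3_smul (c : ℝ) (p q r : ℝ × ℝ × ℝ) :
    det3 (c•p) (c•q) (c•r) = c^3 * det3 p q r := by
  simp only [det3, Prod.smul_fst, Prod.smul_snd, smul_eq_mul]
  ring

lemma det3_dB (x y z : ℝ) : det3 (dB x) (dB y) (dB z) =
    Real.sin (x - y) + Real.sin (y - z) + Real.sin (z - x) := by
  simp only [det3, dB, Real.sin_sub]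
  ring

lemma det3_dB_ne {m : ℕ} (hm : 3 ≤ m) :
    det3 (dB (phiI m 0)) (dB (phiI m 1)) (dB (phiI m 2)) ≠ 0 := by
  have hβ := bet_pos hm
  have hβ3 := bet_le hm
  have hππ := Real.pi_pos
  rw [det3_dB]
  have e1 : phiI m 0 - phiI m 1 = -(2*bet m) := by simp only [phiI]; push_cast; ring
  have e2 : phiI m 1 - phiI m 2 = -(2*bet m) := by simp only [phiI]; push_cast; ring
  have e3 : phiI m 2 - phiI m 0 = 2*(2*bet m) := by simp only [phiI]; push_cast; ring
  rw [e1, e2, e3, Real.sin_neg]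
  have h4 : Real.sin (2*(2*bet m)) = 2*Real.sin (2*bet m)*Real.cos (2*bet m) :=
    Real.sin_two_mul _
  rw [h4]
  have hs : 0 < Real.sin (2*bet m) :=
    Real.sin_pos_of_pos_of_lt_pi (by linarith) (by linarith)
  have hc : Real.cos (2*bet m) < 1 := cos_lt_one' (by linarith) (by linarith)
  nlinarith




lemma dA_ne (θ : ℝ) : dA θ ≠ 0 := by
  intro h
  have := congrArg (fun p : ℝ × ℝ × ℝ => p.2.2) h
  simp [dA] at this

lemma cond_flip {m : ℕ} (θ : ℝ) (k : ℕ) :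
    (-(gam m) ≤ Real.cos (θ - phiI m k)) ↔
      Real.cos (θ - (2*(k:ℝ)+1)*bet m) ≤ gam m := by
  have h : θ - phiI m k = (θ - (2*(k:ℝ)+1)*bet m) - π := by simp only [phiI]; ring
  have h2 : Real.cos (θ - phiI m k) = -Real.cos (θ - (2*(k:ℝ)+1)*bet m) := by
    rw [h, Real.cos_sub, Real.cos_pi, Real.sin_pi]; ring
  rw [h2]
  constructor <;> intro <;> linarith

lemma allowed_center {m : ℕ} (hm : 3 ≤ m) (j k : ℕ) :
    Real.cos (2*(j:ℝ)*bet m - (2*(k:ℝ)+1)*bet m) ≤ gam m := by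
  have hβ := bet_pos hm
  have hβ3 := bet_le hm
  have hππ := Real.pi_pos
  show _ ≤ Real.cos (bet m / 2)
  apply K0c (by linarith) (by linarith)
  intro l
  have := odd_mul_bet_ge hm j k l
  linarith


/-- for every `n ≥ 4` there are `n` segments in ℝ³, not all coplanar, whose
set of transversals has exactly `n − 1` connected components. -/
theorem stmt_14 (n : ℕ) (hn : 4 ≤ n) :
    ∃ x y : Fin n → ℝ × ℝ × ℝ,
      (¬ ∃ H : Set (ℝ × ℝ × ℝ), IsPlane H ∧ ∀ i, segment ℝ (x i) (y i) ⊆ H) ∧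
      ∃ T : Fin (n - 1) → Set (ℝ × ℝ × ℝ),
        (∀ j, IsTransversal (fun i => segment ℝ (x i) (y i)) (T j)) ∧
        (∀ j j', j ≠ j' → ¬ SameComp (fun i => segment ℝ (x i) (y i)) (T j) (T j')) ∧
        ∀ L, IsTransversal (fun i => segment ℝ (x i) (y i)) L →
          ∃ j, SameComp (fun i => segment ℝ (x i) (y i)) L (T j) := by
  have hm : 3 ≤ n - 1 := by omega
  set m := n - 1 with hmdef
  have hβ := bet_pos hm
  have hβ3 := bet_le hm
  have hππ := Real.pi_pos
  have hβπ2 : bet m / 2 ≤ π := by linarith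
  have hβπ : bet m ≤ π := by linarith
  have hγ1 := gam_lt_one hm
  refine ⟨fun i => xE m (min i.1 (m-1)), fun i => yE m (min i.1 (m-1)), ?_, ?_⟩
  · -- not all coplanar
    rintro ⟨H, ⟨aH, u, w, hind, hHeq⟩, hsub⟩
    have hrep : ∀ k : ℕ, k < 3 → ∃ c1 c2 : ℝ,
        (2*rad m) • dB (phiI m k) = c1 • u + c2 • w := by
      intro k hk3
      have hkn : k < n := by omega
      have hKk : min (Fin.val (⟨k, hkn⟩ : Fin n)) (m-1) = k := by
        simp only [Fin.val_mk]; omega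
      have hxm := hsub ⟨k, hkn⟩ (left_mem_segment ℝ _ _)
      have hym := hsub ⟨k, hkn⟩ (right_mem_segment ℝ _ _)
      rw [hHeq] at hxm hym
      simp only [hKk] at hxm hym
      obtain ⟨r1, s1, he1⟩ := hym
      obtain ⟨r2, s2, he2⟩ := hxm
      refine ⟨r1 - r2, s1 - s2, ?_⟩
      have hdiff : yE m k - xE m k = (2*rad m) • dB (phiI m k) := by
        rw [xE, yE]; module
      rw [← hdiff, he1, he2]; module
    obtain ⟨a1, b1, h1⟩ := hrep 0 (by norm_num)
    obtain ⟨a2, b2, h2⟩ := hrep 1 (by norm_num)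
    obtain ⟨a3, b3, h3⟩ := hrep 2 (by norm_num)
    have hzero : det3 ((2*rad m) • dB (phiI m 0)) ((2*rad m) • dB (phiI m 1))
        ((2*rad m) • dB (phiI m 2)) = 0 := by
      rw [h1, h2, h3]; exact det3_span _ _ _ _ _ _
    rw [det3_smul] at hzero
    have hN := rad_pos hm
    have hNne : (2*rad m)^3 ≠ 0 := pow_ne_zero _ (by linarith)
    rcases mul_eq_zero.1 hzero with h | h
    · exact hNne h
    · exact det3_dB_ne hm h
  · -- the transversal components
    refine ⟨fun j => lineThrough (cpt (2*(j.1:ℝ)*bet m)) (dA (2*(j.1:ℝ)*bet m)),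
      ?_, ?_, ?_⟩
    · -- each T j is a transversal
      intro j
      constructor
      · exact ⟨_, _, dA_ne _, rfl⟩
      · intro i
        have hkm : min i.1 (m-1) < m := by omega
        show (lineThrough _ _ ∩ segment ℝ (xE m (min i.1 (m-1))) (yE m (min i.1 (m-1)))).Nonempty
        simp only [xE, yE]
        refine (meet_iff hm _ _).2 ?_
        rw [cond_flip]
        exact allowed_center hm j.1 (min i.1 (m-1))
    · -- distinct components
      intro j j' hjj hSC
      obtain ⟨A, V, hcA, hcV, hVne, htr, he0, he1⟩ := hSC
      have hseg : ∀ t : ℝ, t ∈ Icc (0:ℝ) 1 → ∀ k : ℕ, k < m →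
          (lineThrough (A t) (V t) ∩ segment ℝ (xE m k) (yE m k)).Nonempty := by
        intro t ht k hkm
        have hkn : k < n := by omega
        have h := htr t ht ⟨k, hkn⟩
        have hKk : min (Fin.val (⟨k, hkn⟩ : Fin n)) (m-1) = k := by
          simp only [Fin.val_mk]; omega
        simpa [hKk] using h
      have hstruct : ∀ t : ℝ, t ∈ Icc (0:ℝ) 1 → ∃ θ : ℝ,
          V t = (V t).2.2 • dA θ ∧ (V t).2.2 ≠ 0 ∧
          lineThrough (A t) (V t) = lineThrough (cpt θ) (dA θ) ∧
          ∀ k : ℕ, k < m → Real.cos (θ - (2*(k:ℝ)+1)*bet m) ≤ gam m := by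
        intro t ht
        obtain ⟨θ, hvW, hv3, hlineEq⟩ := classify hm (hVne t ht)
          (hseg t ht 0 (by omega)) (hseg t ht 1 (by omega)) (hseg t ht 2 (by omega))
        refine ⟨θ, hvW, hv3, hlineEq, ?_⟩
        intro k hkm
        have h := hseg t ht k hkm
        rw [hlineEq] at h
        simp only [xE, yE] at h
        exact (cond_flip θ k).1 ((meet_iff hm θ (phiI m k)).1 h)
      set q : ℝ → ℝ × ℝ := fun t => ((V t).2.1 / (V t).2.2, -(V t).1 / (V t).2.2) with hq
      have hVne3 : ∀ t ∈ Icc (0:ℝ) 1, (V t).2.2 ≠ 0 := by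
        intro t ht
        obtain ⟨θ, _, hv3, _, _⟩ := hstruct t ht
        exact hv3
      have hqcont : ContinuousOn q (Icc 0 1) := by
        apply ContinuousOn.prodMk
        · exact (hcV.snd.fst).div (hcV.snd.snd) hVne3
        · exact ((hcV.fst).neg).div (hcV.snd.snd) hVne3
      have hqval : ∀ t ∈ Icc (0:ℝ) 1, ∀ θ : ℝ, V t = (V t).2.2 • dA θ → (V t).2.2 ≠ 0 →
          q t = (Real.cos θ, Real.sin θ) := by
        intro t ht θ hvW hv3
        have c1 : (V t).1 = (V t).2.2 * (-Real.sin θ) := by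
          conv_lhs => rw [hvW]
          simp [dA]
        have c2 : (V t).2.1 = (V t).2.2 * Real.cos θ := by
          conv_lhs => rw [hvW]
          simp [dA]
        rw [hq]
        simp only
        rw [c1, c2]
        apply Prod.ext
        · show (V t).2.2 * Real.cos θ / (V t).2.2 = Real.cos θ
          field_simp
        · show -((V t).2.2 * -Real.sin θ) / (V t).2.2 = Real.sin θ
          field_simp
      have hallow : ∀ t ∈ Icc (0:ℝ) 1, ∃ α : ℝ, q t = (Real.cos α, Real.sin α) ∧
          ∀ k : ℕ, k < m → Real.cos (α - (2*(k:ℝ)+1)*bet m) ≤ gam m := by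
        intro t ht
        obtain ⟨θ, hvW, hv3, _, hcondk⟩ := hstruct t ht
        exact ⟨θ, hqval t ht θ hvW hv3, hcondk⟩
      have h0I : (0:ℝ) ∈ Icc (0:ℝ) 1 := Set.left_mem_Icc.2 (by norm_num)
      have h1I : (1:ℝ) ∈ Icc (0:ℝ) 1 := Set.right_mem_Icc.2 (by norm_num)
      have h0q : q 0 = (Real.cos (2*(j.1:ℝ)*bet m), Real.sin (2*(j.1:ℝ)*bet m)) := by
        obtain ⟨θ, hvW, hv3, hlineEq, _⟩ := hstruct 0 h0I
        have hle := line_eq_angle (hlineEq.symm.trans he0)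
        rw [hqval 0 h0I θ hvW hv3, hle.1, hle.2]
      have h1q : q 1 = (Real.cos (2*(j'.1:ℝ)*bet m), Real.sin (2*(j'.1:ℝ)*bet m)) := by
        obtain ⟨θ, hvW, hv3, hlineEq, _⟩ := hstruct 1 h1I
        have hle := line_eq_angle (hlineEq.symm.trans he1)
        rw [hqval 1 h1I θ hvW hv3, hle.1, hle.2]
      have hjm : j.1 < m := by have := j.isLt; omega
      have hjm' : j'.1 < m := by have := j'.isLt; omega
      have hne : j.1 ≠ j'.1 := fun h => hjj (Fin.ext h)
      exact no_path hm q hqcont hallow hjm hjm' hne h0q h1q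
    · -- every transversal connects to some T j
      intro L hL
      obtain ⟨⟨a, v, hvne, hLeq⟩, hmeets⟩ := hL
      have hseg : ∀ k : ℕ, k < m →
          (lineThrough a v ∩ segment ℝ (xE m k) (yE m k)).Nonempty := by
        intro k hkm
        have hkn : k < n := by omega
        have h := hmeets ⟨k, hkn⟩
        have hKk : min (Fin.val (⟨k, hkn⟩ : Fin n)) (m-1) = k := by
          simp only [Fin.val_mk]; omega
        rw [hLeq] at h
        simpa [hKk] using h
      obtain ⟨θ, hvW, hv3, hlineEq⟩ := classify hm hvne
        (hseg 0 (by omega)) (hseg 1 (by omega)) (hseg 2 (by omega))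
      have hcondk : ∀ k : ℕ, k < m → Real.cos (θ - (2*(k:ℝ)+1)*bet m) ≤ gam m := by
        intro k hkm
        have h := hseg k hkm
        rw [hlineEq] at h
        simp only [xE, yE] at h
        exact (cond_flip θ k).1 ((meet_iff hm θ (phiI m k)).1 h)
      obtain ⟨j, hjm, l, hl⟩ := K2 hm θ
      set θs := 2*(j:ℝ)*bet m + 2*π*l with hθs
      have hldist : |θ - θs| ≤ bet m := by
        rw [hθs, show θ - (2*(j:ℝ)*bet m + 2*π*l) = θ - 2*(j:ℝ)*bet m - 2*π*l by ring]
        exact hl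
      refine ⟨⟨j, by omega⟩, fun t => cpt (θ + t*(θs - θ)), fun t => dA (θ + t*(θs - θ)),
        ?_, ?_, ?_, ?_, ?_, ?_⟩
      · have hlc : Continuous fun t : ℝ => θ + t*(θs - θ) :=
          continuous_const.add (continuous_id.mul continuous_const)
        show ContinuousOn (fun t : ℝ => (Real.cos (θ + t*(θs - θ)),
          Real.sin (θ + t*(θs - θ)), (0:ℝ))) (Icc 0 1)
        exact ((Real.continuous_cos.comp hlc).prodMk
          ((Real.continuous_sin.comp hlc).prodMk continuous_const)).continuousOn
      · have hlc : Continuous fun t : ℝ => θ + t*(θs - θ) :=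
          continuous_const.add (continuous_id.mul continuous_const)
        show ContinuousOn (fun t : ℝ => (-Real.sin (θ + t*(θs - θ)),
          Real.cos (θ + t*(θs - θ)), (1:ℝ))) (Icc 0 1)
        exact (((Real.continuous_sin.comp hlc).neg).prodMk
          ((Real.continuous_cos.comp hlc).prodMk continuous_const)).continuousOn
      · intro t ht
        exact dA_ne _
      · intro t ht i
        set k : ℕ := min i.1 (m-1) with hk
        have hkm : k < m := by omega
        show (lineThrough _ _ ∩ segment ℝ (xE m k) (yE m k)).Nonempty
        simp only [xE, yE]
        refine (meet_iff hm _ _).2 ?_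
        rw [cond_flip]
        show Real.cos _ ≤ Real.cos (bet m / 2)
        apply K0c (by linarith) hβπ2
        intro l'
        have hd1 : bet m ≤ |θs - ((2*(k:ℝ)+1)*bet m + 2*π*l')| := by
          have hodd := odd_mul_bet_ge hm j k (l' - l)
          have heq : 2*(j:ℝ)*bet m - (2*(k:ℝ)+1)*bet m - 2*π*((l' - l : ℤ):ℝ)
              = θs - ((2*(k:ℝ)+1)*bet m + 2*π*(l':ℝ)) := by
            rw [hθs]; push_cast; ring
          rwa [heq] at hodd
        have hd2 : bet m/2 ≤ |θ - ((2*(k:ℝ)+1)*bet m + 2*π*l')| := by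
          have hK0d := K0d (by linarith) hβπ2 (hcondk _ hkm) hγ1 l'
          rw [show θ - ((2*(k:ℝ)+1)*bet m + 2*π*(l':ℝ))
            = θ - (2*(k:ℝ)+1)*bet m - 2*π*(l':ℝ) by ring]
          exact hK0d
        have hfin := interval_dist hβ hd1 hd2 hldist ht.1 ht.2
        rw [show θ + t*(θs - θ) - (2*(k:ℝ)+1)*bet m - 2*π*(l':ℝ)
          = θ + t*(θs - θ) - ((2*(k:ℝ)+1)*bet m + 2*π*(l':ℝ)) by ring]
        exact hfin
      · show lineThrough (cpt (θ + 0*(θs - θ))) (dA (θ + 0*(θs - θ))) = L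
        rw [show θ + 0*(θs - θ) = θ by ring, hLeq]
        exact hlineEq.symm
      · show lineThrough (cpt (θ + 1*(θs - θ))) (dA (θ + 1*(θs - θ))) = _
        rw [show θ + 1*(θs - θ) = θs by ring]
        have hc : cpt θs = cpt (2*(j:ℝ)*bet m) := by
          simp only [cpt]
          rw [hθs, show 2*(j:ℝ)*bet m + 2*π*(l:ℝ) = 2*(j:ℝ)*bet m + (l:ℝ)*(2*π) by ring,
            Real.cos_add_int_mul_two_pi, Real.sin_add_int_mul_two_pi]
        have hd : dA θs = dA (2*(j:ℝ)*bet m) := by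
          simp only [dA]
          rw [hθs, show 2*(j:ℝ)*bet m + 2*π*(l:ℝ) = 2*(j:ℝ)*bet m + (l:ℝ)*(2*π) by ring,
            Real.cos_add_int_mul_two_pi, Real.sin_add_int_mul_two_pi]
        rw [hc, hd]
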